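/- For every natural number m, the 2m-th moment of the normalized arcsine law equals (1/2^m)·(2m choose m), i.e. ∫_{−√2}^{√2} x^(2m) / (π·√(2 − x²)) dx = (1/2^m)·(2m choose m). -/

import Mathlib

open MeasureTheory Real Set

lemma prod_ratio_eq_choose (m : ℕ) :
    ∏ i ∈ Finset.range m, (2 * (i : ℝ) + 1) / (2 * i + 2) =
      (Nat.choose (2 * m) m : ℝ) / 4 ^ m := by
  induction m with
  | zero => simp
  | succ k ih =>
    rw [Finset.prod_range_succ, ih]
    have hnat : (k + 1) * Nat.centralBinom (k + 1) = 2 * (2 * k + 1) * Nat.centralBinom k :=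
      Nat.succ_mul_centralBinom_succ k
    have h1 : ((2 * (k + 1)).choose (k + 1) : ℝ) * (k + 1) =
        2 * (2 * k + 1) * ((2 * k).choose k : ℝ) := by
      have := congrArg (Nat.cast : ℕ → ℝ) hnat
      simp only [Nat.centralBinom] at this
      push_cast at this
      linarith
    have hk1 : ((k : ℝ) + 1) ≠ 0 := by positivity
    field_simp
    linear_combination (-(2 * (4:ℝ) ^ k)) * h1

lemma sin_pow_even_integral (m : ℕ) :
    ∫ θ in (-(π / 2))..(π / 2), Real.sin θ ^ (2 * m) =
      π * ((Nat.choose (2 * m) m : ℝ) / 4 ^ m) := by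
  have hint : ∀ a b : ℝ, IntervalIntegrable (fun x => Real.sin x ^ (2 * m)) volume a b :=
    fun a b => (continuous_sin.pow _).intervalIntegrable a b
  have e1 : ∫ x in (-(π / 2))..0, Real.sin x ^ (2 * m)
      = ∫ x in (0:ℝ)..(π / 2), Real.sin x ^ (2 * m) := by
    have := intervalIntegral.integral_comp_neg (a := (0:ℝ)) (b := π / 2)
      (fun x => Real.sin x ^ (2 * m))
    simp only [neg_zero] at this
    rw [← this]
    congr 1
    ext x
    rw [Real.sin_neg, pow_mul, pow_mul, neg_sq]
  have e2 : ∫ x in (π / 2)..π, Real.sin x ^ (2 * m)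
      = ∫ x in (0:ℝ)..(π / 2), Real.sin x ^ (2 * m) := by
    have := intervalIntegral.integral_comp_sub_left (a := (0:ℝ)) (b := π / 2)
      (fun x => Real.sin x ^ (2 * m)) π
    simp only [sub_zero, Real.sin_pi_sub] at this
    rw [show π - π / 2 = π / 2 by ring] at this
    exact this.symm
  have split1 : ∫ x in (-(π / 2))..(π / 2), Real.sin x ^ (2 * m)
      = (∫ x in (-(π / 2))..0, Real.sin x ^ (2 * m))
        + ∫ x in (0:ℝ)..(π / 2), Real.sin x ^ (2 * m) :=
    (intervalIntegral.integral_add_adjacent_intervals (hint _ _) (hint _ _)).symm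
  have split2 : ∫ x in (0:ℝ)..π, Real.sin x ^ (2 * m)
      = (∫ x in (0:ℝ)..(π / 2), Real.sin x ^ (2 * m))
        + ∫ x in (π / 2)..π, Real.sin x ^ (2 * m) :=
    (intervalIntegral.integral_add_adjacent_intervals (hint _ _) (hint _ _)).symm
  have : ∫ x in (-(π / 2))..(π / 2), Real.sin x ^ (2 * m)
      = ∫ x in (0:ℝ)..π, Real.sin x ^ (2 * m) := by
    rw [split1, split2, e1, e2]
  rw [this, integral_sin_pow_even, prod_ratio_eq_choose]

theorem arcsine_even_moment (m : ℕ) :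
    ∫ x in (-Real.sqrt 2)..(Real.sqrt 2),
      x ^ (2 * m) / (Real.pi * Real.sqrt (2 - x ^ 2)) =
    (Nat.choose (2 * m) m : ℝ) / 2 ^ m := by
  set g : ℝ → ℝ := fun x => x ^ (2 * m) / (Real.pi * Real.sqrt (2 - x ^ 2)) with hg
  have hsqrt2 : (0 : ℝ) < Real.sqrt 2 := Real.sqrt_pos.mpr (by norm_num)
  have hsq2 : Real.sqrt 2 ^ 2 = 2 := Real.sq_sqrt (by norm_num)
  -- change of variables x = √2 sin θ
  have himg : (fun θ => Real.sqrt 2 * Real.sin θ) '' Ioo (-(π / 2)) (π / 2)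
      = Ioo (-Real.sqrt 2) (Real.sqrt 2) := by
    ext x
    constructor
    · rintro ⟨θ, hθ, rfl⟩
      have h1 : Real.sin θ < 1 := by
        have := Real.strictMonoOn_sin (Set.mem_Icc.mpr ⟨hθ.1.le, hθ.2.le⟩)
          (Set.mem_Icc.mpr ⟨by linarith [Real.pi_pos], le_refl _⟩) hθ.2
        simpa using this
      have h2 : -1 < Real.sin θ := by
        have := Real.strictMonoOn_sin
          (Set.mem_Icc.mpr ⟨le_refl _, by linarith [Real.pi_pos]⟩)
          (Set.mem_Icc.mpr ⟨hθ.1.le, hθ.2.le⟩) hθ.1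
        simpa using this
      constructor
      · have := mul_lt_mul_of_pos_left h2 hsqrt2
        simpa using this
      · have := mul_lt_mul_of_pos_left h1 hsqrt2
        simpa using this
    · intro hx
      refine ⟨Real.arcsin (x / Real.sqrt 2), ⟨?_, ?_⟩, ?_⟩
      · rw [Real.neg_pi_div_two_lt_arcsin, lt_div_iff₀ hsqrt2]
        nlinarith [hx.1]
      · rw [Real.arcsin_lt_pi_div_two, div_lt_one hsqrt2]; exact hx.2
      · show Real.sqrt 2 * Real.sin (Real.arcsin (x / Real.sqrt 2)) = x
        rw [Real.sin_arcsin]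
        · field_simp
        · rw [neg_le, ← neg_div, div_le_one hsqrt2]; linarith [hx.1]
        · rw [div_le_one hsqrt2]; exact hx.2.le
  have hderiv : ∀ θ ∈ Ioo (-(π / 2)) (π / 2),
      HasDerivWithinAt (fun θ => Real.sqrt 2 * Real.sin θ)
        (Real.sqrt 2 * Real.cos θ) (Ioo (-(π / 2)) (π / 2)) θ := fun θ _ =>
    ((Real.hasDerivAt_sin θ).const_mul (Real.sqrt 2)).hasDerivWithinAt
  have hinj : InjOn (fun θ => Real.sqrt 2 * Real.sin θ) (Ioo (-(π / 2)) (π / 2)) := by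
    intro a ha b hb h
    have : Real.sin a = Real.sin b := by
      field_simp at h; exact h
    exact Real.injOn_sin (Set.mem_Icc.mpr ⟨ha.1.le, ha.2.le⟩)
      (Set.mem_Icc.mpr ⟨hb.1.le, hb.2.le⟩) this
  have hchg := integral_image_eq_integral_abs_deriv_smul measurableSet_Ioo hderiv hinj g
  rw [himg] at hchg
  -- simplify the transformed integrand
  have heq : EqOn (fun θ => |Real.sqrt 2 * Real.cos θ| • g (Real.sqrt 2 * Real.sin θ))
      (fun θ => (2 : ℝ) ^ m / π * Real.sin θ ^ (2 * m)) (Ioo (-(π / 2)) (π / 2)) := by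
    intro θ hθ
    have hc : 0 < Real.cos θ := Real.cos_pos_of_mem_Ioo hθ
    have hs : 2 - (Real.sqrt 2 * Real.sin θ) ^ 2 = 2 * Real.cos θ ^ 2 := by
      rw [mul_pow, hsq2]
      nlinarith [Real.sin_sq_add_cos_sq θ]
    have hsqrt : Real.sqrt (2 - (Real.sqrt 2 * Real.sin θ) ^ 2)
        = Real.sqrt 2 * Real.cos θ := by
      rw [hs, Real.sqrt_mul (by norm_num), Real.sqrt_sq hc.le]
    simp only [hg, smul_eq_mul]
    rw [hsqrt, abs_of_pos (by positivity), mul_pow]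
    have h2m : Real.sqrt 2 ^ (2 * m) = 2 ^ m := by rw [pow_mul, hsq2]
    rw [h2m]
    have hpi := Real.pi_ne_zero
    have hne : Real.sqrt 2 * Real.cos θ ≠ 0 := by positivity
    field_simp
  rw [setIntegral_congr_fun measurableSet_Ioo heq] at hchg
  -- assemble
  have hab : -Real.sqrt 2 ≤ Real.sqrt 2 := by linarith
  have hcd : -(π / 2) ≤ π / 2 := by linarith [Real.pi_pos]
  rw [intervalIntegral.integral_of_le hab, integral_Ioc_eq_integral_Ioo, hchg]
  have step : ∫ θ in Ioo (-(π / 2)) (π / 2), (2 : ℝ) ^ m / π * Real.sin θ ^ (2 * m)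
      = (2 : ℝ) ^ m / π * ∫ θ in Ioo (-(π / 2)) (π / 2), Real.sin θ ^ (2 * m) :=
    integral_const_mul _ _
  rw [step, ← integral_Ioc_eq_integral_Ioo,
    ← intervalIntegral.integral_of_le hcd, sin_pow_even_integral]
  have hpi := Real.pi_ne_zero
  field_simp
  rw [show (4:ℝ) ^ m = 2 ^ m * 2 ^ m by rw [show (4:ℝ) = 2 * 2 by norm_num, mul_pow]]
  ring
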